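/- arXiv:cs/0701045 — 5 statements merged into one kernel-verified Lean document; each statement's English description precedes it below -/
import Mathlib

section
/- Let n ≥ 3 and let P = (V_0,…,V_{n−1}) be an n-gon in ℝ². The following are equivalent: (I) P is ordinary, locally-strict, and convex; (II) P is quasi-strict and convex; (III) P is strict and convex. -/
/-- The argument of a nonzero vector `v = (x,y)` in the plane: the unique `ψ ∈ [0, 2π)`
with `x = |v| cos ψ` and `y = |v| sin ψ`. -/
noncomputable def parg (v : ℝ × ℝ) : ℝ :=
  if Complex.arg ((v.1 : ℂ) + v.2 * Complex.I) < 0 then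
    Complex.arg ((v.1 : ℂ) + v.2 * Complex.I) + 2 * Real.pi
  else
    Complex.arg ((v.1 : ℂ) + v.2 * Complex.I)

/-- The argument `α_i = arg (V_{i+1} - V_i)` of the `i`-th edge vector of the `n`-gon `V`
(indices taken mod `n`, so that `V_n = V_0`). -/
noncomputable def edgeArg (n : ℕ) (V : ℕ → ℝ × ℝ) (i : ℕ) : ℝ :=
  parg (V ((i + 1) % n) - V i)

/-- An `n`-gon is convex if the union of its edges `[V_i, V_{i+1}]` coincides with the
topological boundary of the convex hull of its vertex set. -/
def IsConvexPolygon (n : ℕ) (V : ℕ → ℝ × ℝ) : Prop :=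
  (⋃ i ∈ Finset.range n, segment ℝ (V i) (V ((i + 1) % n)))
    = frontier (convexHull ℝ (V '' Set.Iio n))

/-- `V_i ≠ V_{i+1}` for all `i` (with `V_n = V_0`). -/
def LocallyOrdinary (n : ℕ) (V : ℕ → ℝ × ℝ) : Prop :=
  ∀ i < n, V i ≠ V ((i + 1) % n)

/-- All vertices are pairwise distinct. -/
def Ordinary (n : ℕ) (V : ℕ → ℝ × ℝ) : Prop :=
  ∀ i < n, ∀ j < n, i ≠ j → V i ≠ V j

/-- For every `i`, the vertices `V_{i-1}, V_i, V_{i+1}` are non-collinear. -/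
def LocallyStrict (n : ℕ) (V : ℕ → ℝ × ℝ) : Prop :=
  ∀ i < n, ¬ Collinear ℝ ({V ((i + n - 1) % n), V i, V ((i + 1) % n)} : Set (ℝ × ℝ))

/-- No two adjacent vertices `V_i, V_{i⊕1}` are collinear with any other vertex `V_j`. -/
def QuasiStrict (n : ℕ) (V : ℕ → ℝ × ℝ) : Prop :=
  ∀ i < n, ∀ j < n, j ≠ i → j ≠ (i + 1) % n →
    ¬ Collinear ℝ ({V i, V ((i + 1) % n), V j} : Set (ℝ × ℝ))

/-- No three distinct vertices are collinear. -/
def StrictPolygon (n : ℕ) (V : ℕ → ℝ × ℝ) : Prop :=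
  ∀ i < n, ∀ j < n, ∀ k < n, i ≠ j → i ≠ k → j ≠ k →
    ¬ Collinear ℝ ({V i, V j, V k} : Set (ℝ × ℝ))

/-- The half-open edge `[V_i, V_{i+1})` of the `n`-gon `V`. -/
def halfOpenEdge (n : ℕ) (V : ℕ → ℝ × ℝ) (i : ℕ) : Set (ℝ × ℝ) :=
  segment ℝ (V i) (V ((i + 1) % n)) \ {V ((i + 1) % n)}

/-- `[V_i, V_{i+1}) ∩ [V_{i+1}, V_{i+2}) = ∅` for all `i`. -/
def LocallySimple (n : ℕ) (V : ℕ → ℝ × ℝ) : Prop :=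
  ∀ i < n, halfOpenEdge n V i ∩ halfOpenEdge n V ((i + 1) % n) = ∅

/-- `[V_i, V_{i+1}) ∩ [V_j, V_{j+1}) = ∅` for all distinct `i, j`. -/
def SimplePolygon (n : ℕ) (V : ℕ → ℝ × ℝ) : Prop :=
  ∀ i < n, ∀ j < n, i ≠ j → halfOpenEdge n V i ∩ halfOpenEdge n V j = ∅

/-- The `n`-gon `V` is c-increasing: for some `k ∈ {0,…,n-1}`, one has
`α_k < … < α_{n-1} < α_0 < … < α_{k-1}`, where `α_i = arg (V_{i+1} - V_i)`.
(Equivalently: `α` is strictly increasing along the cyclic order starting at `k`.) -/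
noncomputable def CIncreasing (n : ℕ) (V : ℕ → ℝ × ℝ) : Prop :=
  ∃ k < n, ∀ i < n, ∀ j < n,
    (i + n - k) % n < (j + n - k) % n → edgeArg n V i < edgeArg n V j

/-- c-decreasing: all the inequalities in the definition of c-increasing are reversed. -/
noncomputable def CDecreasing (n : ℕ) (V : ℕ → ℝ × ℝ) : Prop :=
  ∃ k < n, ∀ i < n, ∀ j < n,
    (i + n - k) % n < (j + n - k) % n → edgeArg n V i > edgeArg n V j

/-- c-nondecreasing: as c-increasing, with `≤` in place of `<`. -/
noncomputable def CNondecreasing (n : ℕ) (V : ℕ → ℝ × ℝ) : Prop :=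
  ∃ k < n, ∀ i < n, ∀ j < n,
    (i + n - k) % n < (j + n - k) % n → edgeArg n V i ≤ edgeArg n V j

/-- c-nonincreasing: as c-increasing, with `≥` in place of `<`. -/
noncomputable def CNonincreasing (n : ℕ) (V : ℕ → ℝ × ℝ) : Prop :=
  ∃ k < n, ∀ i < n, ∀ j < n,
    (i + n - k) % n < (j + n - k) % n → edgeArg n V i ≥ edgeArg n V j

section Aux

open FiniteDimensional Module

private lemma mod_add_ne {n i d : ℕ} (hd : 0 < d) (hdn : d < n) (hi : i < n) :
    (i + d) % n ≠ i := by
  intro h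
  have h2 : i ≡ i + d [MOD n] := by
    show i % n = (i + d) % n
    rw [Nat.mod_eq_of_lt hi, h]
  have h3 : n ∣ d := by
    have := (Nat.modEq_iff_dvd' (Nat.le_add_right i d)).1 h2
    simpa using this
  exact absurd (Nat.le_of_dvd hd h3) (not_le.2 hdn)

private lemma eq_of_combo {p x e : ℝ} (hp : 0 < p) (hx : x ≤ e) (h : p * (e - x) ≤ 0) :
    x = e := by nlinarith

/-- Key convexity fact: if `A, C, W ∈ s` are not collinear, `B` is strictly between `A` and
`C`, and `E` is strictly between `B` and `W`, then `E` is in the interior of `s`. -/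
private lemma mem_interior_of_openSegment
    {s : Set (ℝ × ℝ)} (hs : Convex ℝ s) {A C W B E : ℝ × ℝ}
    (hA : A ∈ s) (hC : C ∈ s) (hW : W ∈ s)
    (hncol : ¬ Collinear ℝ ({A, C, W} : Set (ℝ × ℝ)))
    (hB : B ∈ openSegment ℝ A C) (hE : E ∈ openSegment ℝ B W) :
    E ∈ interior s := by
  have hfr2 : finrank ℝ (ℝ × ℝ) = 2 := by
    simp [finrank_prod]
  have hspan3 : affineSpan ℝ ({A, C, W} : Set (ℝ × ℝ)) = ⊤ := by
    have hfin : ¬ finrank ℝ (vectorSpan ℝ ({A, C, W} : Set (ℝ × ℝ))) ≤ 1 :=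
      fun h => hncol (collinear_iff_finrank_le_one.mpr h)
    have hle := Submodule.finrank_le (vectorSpan ℝ ({A, C, W} : Set (ℝ × ℝ)))
    have hv : vectorSpan ℝ ({A, C, W} : Set (ℝ × ℝ)) = ⊤ :=
      Submodule.eq_top_of_finrank_eq (by omega)
    have hne : ((affineSpan ℝ ({A, C, W} : Set (ℝ × ℝ)) : AffineSubspace ℝ (ℝ × ℝ)) :
        Set (ℝ × ℝ)).Nonempty := ⟨A, mem_affineSpan ℝ (Set.mem_insert _ _)⟩
    rw [← AffineSubspace.direction_eq_top_iff_of_nonempty hne, direction_affineSpan]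
    exact hv
  have hACW : ({A, C, W} : Set (ℝ × ℝ)) ⊆ s := by
    intro x hx
    simp only [Set.mem_insert_iff, Set.mem_singleton_iff] at hx
    rcases hx with rfl | rfl | rfl <;> assumption
  have htop : affineSpan ℝ s = ⊤ := by
    rw [eq_top_iff, ← hspan3]
    exact affineSpan_mono ℝ hACW
  have hint : (interior s).Nonempty := hs.interior_nonempty_iff_affineSpan_eq_top.mpr htop
  by_contra hEi
  obtain ⟨f, hf⟩ := geometric_hahn_banach_open_point hs.interior isOpen_interior hEi
  have hle : ∀ x ∈ s, f x ≤ f E := by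
    intro x hx
    obtain ⟨x₀, hx₀⟩ := hint
    have hsub : openSegment ℝ x₀ x ⊆ interior s :=
      hs.openSegment_interior_self_subset_interior hx₀ hx
    have hxc : x ∈ closure (openSegment ℝ x₀ x) :=
      segment_subset_closure_openSegment (right_mem_segment ℝ x₀ x)
    have h1 : closure (openSegment ℝ x₀ x) ⊆ {y : ℝ × ℝ | f y ≤ f E} := by
      rw [← (isClosed_le f.continuous continuous_const).closure_eq]
      exact closure_mono fun y hy => (hf y (hsub hy)).le
    exact h1 hxc
  obtain ⟨u, v, hu, hv, huv, rfl⟩ := hB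
  obtain ⟨t, w, ht, hw, htw, rfl⟩ := hE
  have hfA := hle A hA
  have hfC := hle C hC
  have hfW := hle W hW
  set e := f (t • (u • A + v • C) + w • W) with he
  have hEval : e = t * u * f A + t * v * f C + w * f W := by
    rw [he]
    simp only [map_add, map_smul, smul_eq_mul]
    ring
  have esum : t * u * (e - f A) + t * v * (e - f C) + w * (e - f W) = 0 := by
    have h1 : t * u + t * v + w = 1 := by
      have : t * (u + v) + w = 1 := by rw [huv, mul_one]; exact htw
      nlinarith
    linear_combination e * h1 + hEval
  have e1 : 0 ≤ t * u * (e - f A) := mul_nonneg (mul_pos ht hu).le (by linarith)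
  have e2 : 0 ≤ t * v * (e - f C) := mul_nonneg (mul_pos ht hv).le (by linarith)
  have e3 : 0 ≤ w * (e - f W) := mul_nonneg hw.le (by linarith)
  have hAe : f A = e := eq_of_combo (mul_pos ht hu) hfA (by linarith)
  have hCe : f C = e := eq_of_combo (mul_pos ht hv) hfC (by linarith)
  have hWe : f W = e := eq_of_combo hw hfW (by linarith)
  set F := (f : (ℝ × ℝ) →ₗ[ℝ] ℝ) with hF
  have hf0 : F ≠ 0 := by
    intro h0
    obtain ⟨x₀, hx₀⟩ := hint
    have h1 : f x₀ < e := hf x₀ hx₀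
    have h2 : f x₀ = 0 := by
      have : F x₀ = 0 := by rw [h0]; rfl
      exact this
    have h3 : (e : ℝ) = 0 := by
      have h4 := hAe
      have h5 : f A = 0 := by
        have : F A = 0 := by rw [h0]; rfl
        exact this
      linarith
    linarith
  have hker : vectorSpan ℝ ({A, C, W} : Set (ℝ × ℝ)) ≤ LinearMap.ker F := by
    rw [vectorSpan_def, Submodule.span_le]
    rintro z ⟨x, hx, y, hy, rfl⟩
    simp only [Set.mem_insert_iff, Set.mem_singleton_iff] at hx hy
    have hx' : f x = e := by rcases hx with rfl | rfl | rfl <;> assumption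
    have hy' : f y = e := by rcases hy with rfl | rfl | rfl <;> assumption
    have : f (x -ᵥ y) = 0 := by
      rw [vsub_eq_sub, map_sub, hx', hy', sub_self]
    exact LinearMap.mem_ker.mpr this
  apply hncol
  rw [collinear_iff_finrank_le_one]
  refine le_trans (Submodule.finrank_mono hker) ?_
  have h2 := LinearMap.finrank_range_add_finrank_ker F
  have h3' : LinearMap.range F ≠ ⊥ := by
    rwa [ne_eq, LinearMap.range_eq_bot]
  have h3 : finrank ℝ (LinearMap.range F) ≠ 0 := fun h =>
    h3' (Submodule.finrank_eq_zero.mp h)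
  omega

end Aux

section Main

private lemma key_aux (n : ℕ) (hn : 3 ≤ n) (V : ℕ → ℝ × ℝ)
    (hls : LocallyStrict n V) (hconv : IsConvexPolygon n V)
    {m a c : ℕ} (hm : m < n) (ha : a < n) (hc : c < n)
    (hac : V a ≠ V c)
    (hB : V m ∈ openSegment ℝ (V a) (V c)) : False := by
  have hconv' : (⋃ i ∈ Finset.range n, segment ℝ (V i) (V ((i + 1) % n)))
      = frontier (convexHull ℝ (V '' Set.Iio n)) := hconv
  set S := convexHull ℝ (V '' Set.Iio n) with hS
  have hcv : Convex ℝ S := convex_convexHull ℝ _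
  have hmem : ∀ i, i < n → V i ∈ S := fun i hi => subset_convexHull ℝ _ ⟨i, hi, rfl⟩
  have hedge : ∀ i, i < n → segment ℝ (V i) (V ((i + 1) % n)) ⊆ frontier S := by
    intro i hi
    rw [← hconv']
    intro x hx
    rw [Set.mem_iUnion₂]
    exact ⟨i, Finset.mem_range.2 hi, hx⟩
  set p := (m + n - 1) % n with hp
  have hn0 : 0 < n := by omega
  have hp_lt : p < n := Nat.mod_lt _ hn0
  have hp1 : (p + 1) % n = m := by
    rw [hp, Nat.mod_add_mod]
    have h1 : m + n - 1 + 1 = m + n := by omega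
    rw [h1, Nat.add_mod_right, Nat.mod_eq_of_lt hm]
  have hm1 : (m + 1) % n < n := Nat.mod_lt _ hn0
  have hlsm := hls m hm
  rw [show (m + n - 1) % n = p from rfl] at hlsm
  have hwB : Wbtw ℝ (V a) (V m) (V c) :=
    mem_segment_iff_wbtw.1 (openSegment_subset_segment ℝ _ _ hB)
  have hBline : V m ∈ line[ℝ, V a, V c] := hwB.mem_affineSpan
  obtain ⟨W, hWmem, hWncol, hseg⟩ :
      ∃ W, W ∈ S ∧ ¬ Collinear ℝ ({V a, V c, W} : Set (ℝ × ℝ)) ∧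
        openSegment ℝ (V m) W ⊆ frontier S := by
    by_cases h1 : Collinear ℝ ({V a, V c, V ((m + 1) % n)} : Set (ℝ × ℝ))
    · refine ⟨V p, hmem p hp_lt, ?_, ?_⟩
      · intro h2
        apply hlsm
        have l1 : V ((m + 1) % n) ∈ line[ℝ, V a, V c] :=
          h1.mem_affineSpan_of_mem_of_ne (Set.mem_insert _ _)
            (Set.mem_insert_of_mem _ (Set.mem_insert _ _))
            (Set.mem_insert_of_mem _ (Set.mem_insert_of_mem _ rfl)) hac
        have l2 : V p ∈ line[ℝ, V a, V c] :=
          h2.mem_affineSpan_of_mem_of_ne (Set.mem_insert _ _)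
            (Set.mem_insert_of_mem _ (Set.mem_insert _ _))
            (Set.mem_insert_of_mem _ (Set.mem_insert_of_mem _ rfl)) hac
        exact collinear_triple_of_mem_affineSpan_pair l2 hBline l1
      · intro x hx
        apply hedge p hp_lt
        rw [hp1, segment_symm]
        exact openSegment_subset_segment ℝ _ _ hx
    · refine ⟨V ((m + 1) % n), hmem _ hm1, h1, ?_⟩
      intro x hx
      exact hedge m hm (openSegment_subset_segment ℝ _ _ hx)
  have hBW : V m ≠ W := by
    intro h
    apply hWncol
    rw [← h]
    have := collinear_insert_of_mem_affineSpan_pair hBline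
    exact this.subset (by intro x hx; simp at hx ⊢; tauto)
  set E : ℝ × ℝ := (1 / 2 : ℝ) • V m + (1 / 2 : ℝ) • W with hE
  have hEopen : E ∈ openSegment ℝ (V m) W :=
    ⟨1 / 2, 1 / 2, by norm_num, by norm_num, by norm_num, rfl⟩
  have hEfr : E ∈ frontier S := hseg hEopen
  have hEint : E ∈ interior S :=
    mem_interior_of_openSegment hcv (hmem a ha) (hmem c hc) hWmem hWncol hB hEopen
  rw [← closure_diff_interior] at hEfr
  exact hEfr.2 hEint

private lemma key (n : ℕ) (hn : 3 ≤ n) (V : ℕ → ℝ × ℝ)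
    (hord : Ordinary n V) (hls : LocallyStrict n V) (hconv : IsConvexPolygon n V) :
    StrictPolygon n V := by
  intro i hi j hj k hk hij hik hjk hcol
  have d1 : V i ≠ V j := hord i hi j hj hij
  have d2 : V i ≠ V k := hord i hi k hk hik
  have d3 : V j ≠ V k := hord j hj k hk hjk
  rcases hcol.wbtw_or_wbtw_or_wbtw with h | h | h
  · exact key_aux n hn V hls hconv hj hi hk d2
      (mem_openSegment_of_ne_left_right d1 d3.symm h.mem_segment)
  · exact key_aux n hn V hls hconv hk hj hi (d1.symm)
      (mem_openSegment_of_ne_left_right d3 d2 h.mem_segment)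
  · exact key_aux n hn V hls hconv hi hk hj (d3.symm)
      (mem_openSegment_of_ne_left_right d2.symm d1.symm h.mem_segment)

private lemma quasi_ordinary {n : ℕ} (hn : 3 ≤ n) {V : ℕ → ℝ × ℝ}
    (qs : QuasiStrict n V) : Ordinary n V := by
  intro i hi j hj hij heq
  have hn0 : 0 < n := by omega
  by_cases hj1 : j = (i + 1) % n
  · subst hj1
    have hk : (i + 2) % n < n := Nat.mod_lt _ hn0
    have hki : (i + 2) % n ≠ i := mod_add_ne (by norm_num) (by omega) hi
    have hki1 : (i + 2) % n ≠ (i + 1) % n := by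
      intro h
      have h2 : (i + 1) ≡ (i + 2) [MOD n] := h.symm
      have h3 := (Nat.modEq_iff_dvd' (by omega)).1 h2
      simp only [show i + 2 - (i + 1) = 1 from by omega] at h3
      have := Nat.le_of_dvd one_pos h3
      omega
    apply qs i hi ((i + 2) % n) hk hki hki1
    have : ({V i, V ((i + 1) % n), V ((i + 2) % n)} : Set (ℝ × ℝ))
        ⊆ {V i, V ((i + 2) % n)} := by
      intro x hx
      simp only [Set.mem_insert_iff, Set.mem_singleton_iff] at hx ⊢
      rcases hx with rfl | h | h
      · left; rfl
      · left; rw [h, ← heq]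
      · right; exact h
    exact (collinear_pair ℝ (V i) (V ((i + 2) % n))).subset this
  · apply qs i hi j hj (Ne.symm hij) hj1
    have : ({V i, V ((i + 1) % n), V j} : Set (ℝ × ℝ))
        ⊆ {V i, V ((i + 1) % n)} := by
      intro x hx
      simp only [Set.mem_insert_iff, Set.mem_singleton_iff] at hx ⊢
      rcases hx with rfl | h | h
      · left; rfl
      · right; exact h
      · left; rw [h, ← heq]
    exact (collinear_pair ℝ (V i) (V ((i + 1) % n))).subset this

private lemma quasi_locallyStrict {n : ℕ} (hn : 3 ≤ n) {V : ℕ → ℝ × ℝ}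
    (qs : QuasiStrict n V) : LocallyStrict n V := by
  intro i hi
  have hn0 : 0 < n := by omega
  set p := (i + n - 1) % n with hp
  have hp_lt : p < n := Nat.mod_lt _ hn0
  have hp1 : (p + 1) % n = i := by
    rw [hp, Nat.mod_add_mod]
    have h1 : i + n - 1 + 1 = i + n := by omega
    rw [h1, Nat.add_mod_right, Nat.mod_eq_of_lt hi]
  have hpi : p ≠ i := by
    have : p = (i + (n - 1)) % n := by rw [hp]; congr 1; omega
    rw [this]
    exact mod_add_ne (by omega) (by omega) hi
  have hpi1 : p ≠ (i + 1) % n := by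
    intro h
    have h2 : (i + 2) % n = i := by
      conv_rhs => rw [← hp1, h]
      rw [Nat.mod_add_mod]
    exact mod_add_ne (by norm_num) (by omega) hi h2
  intro hcol
  apply qs i hi p hp_lt hpi hpi1
  exact hcol.subset (by intro x hx; simp at hx ⊢; tauto)

private lemma strict_quasi {n : ℕ} (hn : 3 ≤ n) {V : ℕ → ℝ × ℝ}
    (st : StrictPolygon n V) : QuasiStrict n V := by
  intro i hi j hj hji hji1
  have hn0 : 0 < n := by omega
  have h1 : (i + 1) % n < n := Nat.mod_lt _ hn0
  exact st i hi ((i + 1) % n) h1 j hj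
    (Ne.symm (mod_add_ne one_pos (by omega) hi)) (Ne.symm hji) (Ne.symm hji1)

end Main

/-- For an `n`-gon with `n ≥ 3`, the following are equivalent:
(I) ordinary, locally-strict and convex; (II) quasi-strict and convex;
(III) strict and convex. -/
theorem strictly_convex_characterizations
    (n : ℕ) (hn : 3 ≤ n) (V : ℕ → ℝ × ℝ) :
    ((Ordinary n V ∧ LocallyStrict n V ∧ IsConvexPolygon n V) ↔
        (QuasiStrict n V ∧ IsConvexPolygon n V)) ∧
    ((QuasiStrict n V ∧ IsConvexPolygon n V) ↔
        (StrictPolygon n V ∧ IsConvexPolygon n V)) := by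
  constructor
  · constructor
    · rintro ⟨h1, h2, h3⟩
      exact ⟨strict_quasi hn (key n hn V h1 h2 h3), h3⟩
    · rintro ⟨h1, h3⟩
      exact ⟨quasi_ordinary hn h1, quasi_locallyStrict hn h1, h3⟩
  · constructor
    · rintro ⟨h1, h3⟩
      exact ⟨key n hn V (quasi_ordinary hn h1) (quasi_locallyStrict hn h1) h3, h3⟩
    · rintro ⟨h1, h3⟩
      exact ⟨strict_quasi hn h1, h3⟩
end

section
/- Let u = (s,t) and v = (x,y) be nonzero vectors in ℝ², and let Δ := sy − tx. Then arg u < arg v if and only if one of the following holds: (u ∈ H₋ and v ∈ H₊), or (u ∈ H₋ and v ∈ H₋ and Δ > 0), or (u ∈ H₊ and v ∈ H₊ and Δ > 0). -/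
/-- The open upper half-plane together with the strictly positive `x`-axis. -/
def Hminus : Set (ℝ × ℝ) := {p | 0 < p.2 ∨ (p.2 = 0 ∧ 0 < p.1)}

/-- The open lower half-plane together with the strictly negative `x`-axis. -/
def Hplus : Set (ℝ × ℝ) := {p | p.2 < 0 ∨ (p.2 = 0 ∧ p.1 < 0)}

namespace PargAux

noncomputable def z (p : ℝ × ℝ) : ℂ := (p.1 : ℂ) + p.2 * Complex.I

lemma z_re (p : ℝ × ℝ) : (z p).re = p.1 := by simp [z]
lemma z_im (p : ℝ × ℝ) : (z p).im = p.2 := by simp [z]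

lemma z_ne (p : ℝ × ℝ) (hp : p ≠ 0) : z p ≠ 0 := by
  intro h
  apply hp
  have h1 : (z p).re = 0 := by rw [h]; simp
  have h2 : (z p).im = 0 := by rw [h]; simp
  rw [z_re] at h1; rw [z_im] at h2
  exact Prod.ext h1 h2

lemma parg_eq (p : ℝ × ℝ) :
    parg p = if Complex.arg (z p) < 0 then Complex.arg (z p) + 2 * Real.pi
      else Complex.arg (z p) := rfl

lemma parg_nonneg (p : ℝ × ℝ) : 0 ≤ parg p := by
  rw [parg_eq]
  split_ifs with h
  · nlinarith [Complex.neg_pi_lt_arg (z p), Real.pi_pos]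
  · linarith [not_lt.mp h]

lemma parg_lt_two_pi (p : ℝ × ℝ) : parg p < 2 * Real.pi := by
  rw [parg_eq]
  split_ifs with h
  · linarith
  · linarith [Complex.arg_le_pi (z p), Real.pi_pos]

lemma cos_parg (p : ℝ × ℝ) : Real.cos (parg p) = Real.cos (Complex.arg (z p)) := by
  rw [parg_eq]
  split_ifs with h
  · rw [Real.cos_add_two_pi]
  · rfl

lemma sin_parg (p : ℝ × ℝ) : Real.sin (parg p) = Real.sin (Complex.arg (z p)) := by
  rw [parg_eq]
  split_ifs with h
  · rw [Real.sin_add_two_pi]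
  · rfl

lemma fst_eq (p : ℝ × ℝ) (hp : p ≠ 0) :
    p.1 = ‖z p‖ * Real.cos (parg p) := by
  rw [cos_parg, Complex.cos_arg (z_ne p hp), ← z_re p]
  field_simp [norm_ne_zero_iff.mpr (z_ne p hp)]

lemma snd_eq (p : ℝ × ℝ) (hp : p ≠ 0) :
    p.2 = ‖z p‖ * Real.sin (parg p) := by
  rw [sin_parg, Complex.sin_arg, ← z_im p]
  field_simp [norm_ne_zero_iff.mpr (z_ne p hp)]

lemma hminus_parg (p : ℝ × ℝ) (hp : p ∈ Hminus) : parg p < Real.pi := by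
  rw [parg_eq]
  rcases hp with h | ⟨h0, h1⟩
  · have hge : ¬ Complex.arg (z p) < 0 := by
      rw [not_lt, Complex.arg_nonneg_iff, z_im]; linarith
    rw [if_neg hge]
    rw [Complex.arg_lt_pi_iff, z_im]
    right; linarith
  · have h0' : Complex.arg (z p) = 0 := by
      rw [Complex.arg_eq_zero_iff, z_re, z_im]; exact ⟨le_of_lt h1, h0⟩
    rw [h0', if_neg (by linarith [Real.pi_pos])]
    exact Real.pi_pos

lemma hplus_parg (p : ℝ × ℝ) (hp : p ∈ Hplus) : Real.pi ≤ parg p := by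
  rw [parg_eq]
  rcases hp with h | ⟨h0, h1⟩
  · have hlt : Complex.arg (z p) < 0 := by
      rw [Complex.arg_neg_iff, z_im]; exact h
    rw [if_pos hlt]
    linarith [Complex.neg_pi_lt_arg (z p)]
  · have h0' : Complex.arg (z p) = Real.pi := by
      rw [Complex.arg_eq_pi_iff, z_re, z_im]; exact ⟨h1, h0⟩
    rw [h0', if_neg (by linarith [Real.pi_pos])]

lemma mem_or (p : ℝ × ℝ) (hp : p ≠ 0) : p ∈ Hminus ∨ p ∈ Hplus := by
  rcases lt_trichotomy p.2 0 with h | h | h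
  · right; left; exact h
  · rcases lt_trichotomy p.1 0 with h1 | h1 | h1
    · right; right; exact ⟨h, h1⟩
    · exact absurd (Prod.ext h1 h) hp
    · left; right; exact ⟨h, h1⟩
  · left; left; exact h

lemma mem_Hminus_iff (p : ℝ × ℝ) (hp : p ≠ 0) : p ∈ Hminus ↔ parg p < Real.pi := by
  constructor
  · exact hminus_parg p
  · intro h
    rcases mem_or p hp with hm | hm
    · exact hm
    · exact absurd (hplus_parg p hm) (not_le.mpr h)

lemma mem_Hplus_iff (p : ℝ × ℝ) (hp : p ≠ 0) : p ∈ Hplus ↔ Real.pi ≤ parg p := by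
  constructor
  · exact hplus_parg p
  · intro h
    rcases mem_or p hp with hm | hm
    · exact absurd (hminus_parg p hm) (not_lt.mpr h)
    · exact hm

lemma delta_eq (u v : ℝ × ℝ) (hu : u ≠ 0) (hv : v ≠ 0) :
    u.1 * v.2 - u.2 * v.1
      = ‖z u‖ * ‖z v‖ * Real.sin (parg v - parg u) := by
  rw [Real.sin_sub]
  rw [fst_eq u hu, snd_eq u hu, fst_eq v hv, snd_eq v hv]
  ring

lemma delta_pos_iff (u v : ℝ × ℝ) (hu : u ≠ 0) (hv : v ≠ 0) :
    0 < u.1 * v.2 - u.2 * v.1 ↔ 0 < Real.sin (parg v - parg u) := by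
  rw [delta_eq u v hu hv]
  have h1 : 0 < ‖z u‖ := norm_pos_iff.mpr (z_ne u hu)
  have h2 : 0 < ‖z v‖ := norm_pos_iff.mpr (z_ne v hv)
  exact mul_pos_iff_of_pos_left (mul_pos h1 h2)

/-- key: A,B with |B-A| < π: sin(B-A)>0 ↔ A < B -/
lemma sin_pos_iff (A B : ℝ) (h : |B - A| < Real.pi) :
    0 < Real.sin (B - A) ↔ A < B := by
  rw [abs_lt] at h
  constructor
  · intro hs
    by_contra hle
    push_neg at hle
    have : 0 ≤ Real.sin (A - B) :=
      Real.sin_nonneg_of_nonneg_of_le_pi (by linarith) (by linarith)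
    rw [← neg_sub, Real.sin_neg] at this
    linarith
  · intro hab
    exact Real.sin_pos_of_pos_of_lt_pi (by linarith) (by linarith)

end PargAux

/-- For nonzero vectors `u = (s,t)` and `v = (x,y)` and `Δ := s y - t x`, one has
`arg u < arg v` iff (`u ∈ H₋` and `v ∈ H₊`), or (`u ∈ H₋`, `v ∈ H₋` and `Δ > 0`), or
(`u ∈ H₊`, `v ∈ H₊` and `Δ > 0`). -/
theorem parg_lt_iff (u v : ℝ × ℝ) (hu : u ≠ 0) (hv : v ≠ 0) :
    parg u < parg v ↔
      ((u ∈ Hminus ∧ v ∈ Hplus) ∨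
       (u ∈ Hminus ∧ v ∈ Hminus ∧ 0 < u.1 * v.2 - u.2 * v.1) ∨
       (u ∈ Hplus ∧ v ∈ Hplus ∧ 0 < u.1 * v.2 - u.2 * v.1)) := by
  open PargAux in
  rw [mem_Hminus_iff u hu, mem_Hminus_iff v hv, mem_Hplus_iff u hu, mem_Hplus_iff v hv,
    delta_pos_iff u v hu hv]
  have hu0 := PargAux.parg_nonneg u
  have hv0 := PargAux.parg_nonneg v
  have hu2 := PargAux.parg_lt_two_pi u
  have hv2 := PargAux.parg_lt_two_pi v
  set A := parg u
  set B := parg v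
  constructor
  · intro hAB
    rcases lt_or_ge A Real.pi with hA | hA
    · rcases lt_or_ge B Real.pi with hB | hB
      · right; left
        refine ⟨hA, hB, ?_⟩
        rw [PargAux.sin_pos_iff A B (by rw [abs_lt]; constructor <;> linarith)]
        exact hAB
      · left; exact ⟨hA, hB⟩
    · right; right
      refine ⟨hA, by linarith, ?_⟩
      rw [PargAux.sin_pos_iff A B (by rw [abs_lt]; constructor <;> linarith)]
      exact hAB
  · rintro (⟨hA, hB⟩ | ⟨hA, hB, hs⟩ | ⟨hA, hB, hs⟩)
    · linarith
    · exact (PargAux.sin_pos_iff A B (by rw [abs_lt]; constructor <;> linarith)).mp hs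
    · exact (PargAux.sin_pos_iff A B (by rw [abs_lt]; constructor <;> linarith)).mp hs
end

section
/- Let u = (s,t) and v = (x,y) be nonzero vectors in ℝ², and let Δ := sy − tx. If arg u < arg v, then (y ≤ 0 ≤ t) or Δ > 0. -/
private lemma parg_mem (v : ℝ × ℝ) : 0 ≤ parg v ∧ parg v < 2 * Real.pi := by
  unfold parg
  have h1 := Complex.neg_pi_lt_arg ((v.1 : ℂ) + v.2 * Complex.I)
  have h2 := Complex.arg_le_pi ((v.1 : ℂ) + v.2 * Complex.I)
  have hpi := Real.pi_pos
  split_ifs with h <;> constructor <;> linarith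

private lemma sin_parg (v : ℝ × ℝ) :
    Real.sin (parg v) = Real.sin (Complex.arg ((v.1 : ℂ) + v.2 * Complex.I)) := by
  unfold parg; split_ifs with h
  · rw [Real.sin_add_two_pi]
  · rfl

private lemma cos_parg (v : ℝ × ℝ) :
    Real.cos (parg v) = Real.cos (Complex.arg ((v.1 : ℂ) + v.2 * Complex.I)) := by
  unfold parg; split_ifs with h
  · rw [Real.cos_add_two_pi]
  · rfl

private lemma parg_repr (v : ℝ × ℝ) :
    v.1 = ‖((v.1 : ℂ) + v.2 * Complex.I)‖ * Real.cos (parg v) ∧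
    v.2 = ‖((v.1 : ℂ) + v.2 * Complex.I)‖ * Real.sin (parg v) := by
  rw [cos_parg, sin_parg]
  constructor
  · have := Complex.norm_mul_cos_arg ((v.1 : ℂ) + v.2 * Complex.I)
    simpa using this.symm
  · have := Complex.norm_mul_sin_arg ((v.1 : ℂ) + v.2 * Complex.I)
    simpa using this.symm

/-- For nonzero vectors `u = (s,t)` and `v = (x,y)` with `Δ := s y - t x`:
if `arg u < arg v` then `y ≤ 0 ≤ t` or `Δ > 0`. -/
theorem parg_lt_imp (u v : ℝ × ℝ) (hu : u ≠ 0) (hv : v ≠ 0)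
    (h : parg u < parg v) :
    (v.2 ≤ 0 ∧ 0 ≤ u.2) ∨ 0 < u.1 * v.2 - u.2 * v.1 := by
  have hzu : ((u.1 : ℂ) + u.2 * Complex.I) ≠ 0 := by
    intro h0
    apply hu
    have h1 : ((u.1 : ℂ) + u.2 * Complex.I).re = 0 := by rw [h0]; simp
    have h2 : ((u.1 : ℂ) + u.2 * Complex.I).im = 0 := by rw [h0]; simp
    simp at h1 h2
    exact Prod.ext h1 h2
  have hzv : ((v.1 : ℂ) + v.2 * Complex.I) ≠ 0 := by
    intro h0
    apply hv
    have h1 : ((v.1 : ℂ) + v.2 * Complex.I).re = 0 := by rw [h0]; simp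
    have h2 : ((v.1 : ℂ) + v.2 * Complex.I).im = 0 := by rw [h0]; simp
    simp at h1 h2
    exact Prod.ext h1 h2
  obtain ⟨hu1, hu2⟩ := parg_repr u
  obtain ⟨hv1, hv2⟩ := parg_repr v
  obtain ⟨ha0, ha2⟩ := parg_mem u
  obtain ⟨hb0, hb2⟩ := parg_mem v
  have hru0 : 0 < ‖((u.1 : ℂ) + u.2 * Complex.I)‖ := norm_pos_iff.mpr hzu
  have hrv0 : 0 < ‖((v.1 : ℂ) + v.2 * Complex.I)‖ := norm_pos_iff.mpr hzv
  set ru := ‖((u.1 : ℂ) + u.2 * Complex.I)‖ with hru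
  set rv := ‖((v.1 : ℂ) + v.2 * Complex.I)‖ with hrv
  set a := parg u with hadef
  set b := parg v with hbdef
  have hcross : u.1 * v.2 - u.2 * v.1 = ru * rv * Real.sin (b - a) := by
    rw [Real.sin_sub]
    linear_combination v.2 * hu1 - v.1 * hu2 - (ru * Real.sin a) * hv1 +
      (ru * Real.cos a) * hv2
  rcases lt_or_ge 0 (u.1 * v.2 - u.2 * v.1) with hc | hc
  · exact Or.inr hc
  left
  have hsin : Real.sin (b - a) ≤ 0 := by
    by_contra hcon
    push_neg at hcon
    nlinarith [mul_pos (mul_pos hru0 hrv0) hcon]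
  have hba : Real.pi ≤ b - a := by
    by_contra hcon
    push_neg at hcon
    have := Real.sin_pos_of_pos_of_lt_pi (x := b - a) (by linarith) hcon
    linarith
  have hpi := Real.pi_pos
  have hsinb : Real.sin b ≤ 0 := by
    have h1 : Real.sin (b - Real.pi) = -Real.sin b := by
      rw [Real.sin_sub]; simp
    have h2 : 0 ≤ Real.sin (b - Real.pi) :=
      Real.sin_nonneg_of_nonneg_of_le_pi (by linarith) (by linarith)
    linarith
  have hsina : 0 ≤ Real.sin a :=
    Real.sin_nonneg_of_nonneg_of_le_pi ha0 (by linarith)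
  constructor
  · rw [hv2]; exact mul_nonpos_of_nonneg_of_nonpos hrv0.le hsinb
  · rw [hu2]; positivity
end

section
/- Let P = (V_0,…,V_{n−1}) be a locally-ordinary n-gon in ℝ² with arg P = (α_0,…,α_{n−1}), and suppose that for some j ≤ k in {0,…,n−1} one has α_j = α_{j+1} = … = α_k. Then V_{k+1} ≠ V_j, and: (I) arg(V_{k+1}−V_j) = arg(V_{i+1}−V_i) for all i with j ≤ i ≤ k; (II) the segment [V_j,V_{k+1}] equals the union of the segments [V_i,V_{i+1}] over j ≤ i ≤ k; (III) the half-open segments [V_i,V_{i+1}) for j ≤ i ≤ k are pairwise disjoint. -/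
section Aux

open Complex Set

/-- The complex number corresponding to a planar vector. -/
noncomputable def cxv (v : ℝ × ℝ) : ℂ := (v.1 : ℂ) + v.2 * Complex.I

lemma cxv_re (v : ℝ × ℝ) : (cxv v).re = v.1 := by simp [cxv]

lemma cxv_im (v : ℝ × ℝ) : (cxv v).im = v.2 := by simp [cxv]

lemma cxv_eq_zero {v : ℝ × ℝ} : cxv v = 0 ↔ v = 0 := by
  constructor
  · intro hz
    have h1 := congrArg Complex.re hz
    have h2 := congrArg Complex.im hz
    simp [cxv] at h1 h2
    exact Prod.ext h1 h2
  · rintro rfl; simp [cxv]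

lemma cxv_smul (r : ℝ) (v : ℝ × ℝ) : cxv (r • v) = (r : ℂ) * cxv v := by
  simp only [cxv, Prod.smul_fst, Prod.smul_snd, smul_eq_mul]
  push_cast
  ring

lemma parg_def (v : ℝ × ℝ) :
    parg v = if Complex.arg (cxv v) < 0 then Complex.arg (cxv v) + 2 * Real.pi
      else Complex.arg (cxv v) := rfl

lemma parg_congr {v w : ℝ × ℝ} (h : Complex.arg (cxv v) = Complex.arg (cxv w)) :
    parg v = parg w := by
  rw [parg_def, parg_def, h]

lemma arg_eq_of_parg_eq {v w : ℝ × ℝ} (h : parg v = parg w) :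
    Complex.arg (cxv v) = Complex.arg (cxv w) := by
  rw [parg_def, parg_def] at h
  have h1 := Complex.arg_le_pi (cxv v)
  have h2 := Complex.neg_pi_lt_arg (cxv v)
  have h3 := Complex.arg_le_pi (cxv w)
  have h4 := Complex.neg_pi_lt_arg (cxv w)
  have hpi := Real.pi_pos
  split_ifs at h with hv hw hw <;> linarith

lemma vec_decomp {v : ℝ × ℝ} (hv : v ≠ 0) :
    v = ‖cxv v‖ •
      (Real.cos (Complex.arg (cxv v)), Real.sin (Complex.arg (cxv v))) := by
  have hz : cxv v ≠ 0 := fun hzz => hv (cxv_eq_zero.mp hzz)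
  have habs : ‖cxv v‖ ≠ 0 := by
    simpa using hz
  apply Prod.ext
  · show v.1 = ‖cxv v‖ * Real.cos (Complex.arg (cxv v))
    rw [Complex.cos_arg hz, cxv_re]
    field_simp
  · show v.2 = ‖cxv v‖ * Real.sin (Complex.arg (cxv v))
    rw [Complex.sin_arg, cxv_im]
    field_simp

lemma Icc_insert_succ (j k : ℕ) (h : j ≤ k + 1) :
    Finset.Icc j (k + 1) = insert (k + 1) (Finset.Icc j k) := by
  ext x
  simp only [Finset.mem_Icc, Finset.mem_insert]
  omega

lemma biUnion_Icc_real (S : ℕ → ℝ) (hS : Monotone S) :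
    ∀ j k : ℕ, j ≤ k →
      (⋃ i ∈ Finset.Icc j k, Set.Icc (S i) (S (i + 1))) = Set.Icc (S j) (S (k + 1)) := by
  intro j k
  induction k with
  | zero =>
    intro hjk
    interval_cases j
    simp
  | succ k ih =>
    intro hjk
    rcases Nat.eq_or_lt_of_le hjk with rfl | h'
    · simp
    · have hjk' : j ≤ k := Nat.lt_succ_iff.mp h'
      rw [Icc_insert_succ j k (by omega)]
      rw [Finset.set_biUnion_insert, ih hjk', Set.union_comm,
        Set.Icc_union_Icc_eq_Icc (hS (by omega : j ≤ k + 1)) (hS (by omega : k + 1 ≤ k + 2))]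

end Aux

/-- If the edge arguments `α_j = … = α_k` of a locally-ordinary `n`-gon coincide, then
`V_{k+1} ≠ V_j`, and: (I) `arg (V_{k+1} - V_j) = arg (V_{i+1} - V_i)` for `j ≤ i ≤ k`;
(II) `[V_j, V_{k+1}] = ⋃_{i=j}^{k} [V_i, V_{i+1}]`; (III) the half-open edges
`[V_i, V_{i+1})`, `j ≤ i ≤ k`, are pairwise disjoint. -/


theorem collinear_run_structure
    (n : ℕ) (V : ℕ → ℝ × ℝ) (hLO : LocallyOrdinary n V)
    (j k : ℕ) (hjk : j ≤ k) (hk : k < n)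
    (h : ∀ i, j ≤ i → i ≤ k → edgeArg n V i = edgeArg n V j) :
    V ((k + 1) % n) ≠ V j ∧
    (∀ i, j ≤ i → i ≤ k →
      parg (V ((k + 1) % n) - V j) = parg (V ((i + 1) % n) - V i)) ∧
    (segment ℝ (V j) (V ((k + 1) % n)) =
      ⋃ i ∈ Finset.Icc j k, segment ℝ (V i) (V ((i + 1) % n))) ∧
    (∀ i, j ≤ i → i ≤ k → ∀ t, j ≤ t → t ≤ k → i ≠ t →
      halfOpenEdge n V i ∩ halfOpenEdge n V t = ∅) := by
  classical
  have hjn : j < n := lt_of_le_of_lt hjk hk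
  set θ : ℝ := Complex.arg (cxv (V ((j + 1) % n) - V j)) with hθdef
  set u : ℝ × ℝ := (Real.cos θ, Real.sin θ) with hudef
  have hcxu : cxv u = Complex.cos (θ : ℂ) + Complex.sin (θ : ℂ) * Complex.I := by
    simp [cxv, hudef, Complex.ofReal_cos, Complex.ofReal_sin]
  have hargu : Complex.arg (cxv u) = θ := by
    rw [hcxu]
    exact Complex.arg_cos_add_sin_mul_I (Complex.arg_mem_Ioc _)
  have habsu : ‖cxv u‖ = 1 := by
    rw [hcxu]; exact Complex.norm_cos_add_sin_mul_I _
  have hu0 : u ≠ 0 := by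
    intro h0
    rw [h0, cxv_eq_zero.mpr rfl] at habsu
    simp at habsu
  set r : ℕ → ℝ := fun i => ‖cxv (V ((i + 1) % n) - V i)‖ with hrdef
  have hrnn : ∀ i, 0 ≤ r i := fun i => norm_nonneg _
  have hargedge : ∀ i, j ≤ i → i ≤ k →
      Complex.arg (cxv (V ((i + 1) % n) - V i)) = θ := by
    intro i hji hik
    exact arg_eq_of_parg_eq (h i hji hik)
  have hedge : ∀ i, j ≤ i → i ≤ k →
      V ((i + 1) % n) - V i = r i • u ∧ 0 < r i := by
    intro i hji hik
    have hin : i < n := lt_of_le_of_lt hik hk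
    have hne : V ((i + 1) % n) - V i ≠ 0 := sub_ne_zero.mpr (Ne.symm (hLO i hin))
    have hz : cxv (V ((i + 1) % n) - V i) ≠ 0 := fun hzz => hne (cxv_eq_zero.mp hzz)
    have hpos : 0 < r i := by
      rw [hrdef]; exact norm_pos_iff.mpr hz
    refine ⟨?_, hpos⟩
    have hvd := vec_decomp hne
    rw [hargedge i hji hik] at hvd
    exact hvd
  set W : ℕ → ℝ × ℝ := fun i => if i ≤ k then V i else V ((k + 1) % n) with hWdef
  set S : ℕ → ℝ := fun i => ∑ t ∈ Finset.Ico j i, r t with hSdef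
  have hSmono : Monotone S := by
    apply monotone_nat_of_le_succ
    intro i
    rw [hSdef]
    exact Finset.sum_le_sum_of_subset_of_nonneg
      (Finset.Ico_subset_Ico_right (Nat.le_succ i)) (fun t _ _ => hrnn t)
  have hSj : S j = 0 := by simp [hSdef]
  have hSsucc : ∀ i, j ≤ i → S (i + 1) = S i + r i := by
    intro i hji
    rw [hSdef]
    exact Finset.sum_Ico_succ_top hji _
  have hWnext : ∀ i, j ≤ i → i ≤ k → V ((i + 1) % n) = W (i + 1) := by
    intro i hji hik
    by_cases hc : i + 1 ≤ k
    · rw [hWdef]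
      simp only [if_pos hc]
      rw [Nat.mod_eq_of_lt (lt_of_le_of_lt hc hk)]
    · have : i = k := by omega
      subst this
      rw [hWdef]
      simp
  have hW : ∀ i, j ≤ i → i ≤ k + 1 → W i = V j + S i • u := by
    intro i hji
    induction i, hji using Nat.le_induction with
    | base =>
      intro _
      rw [hWdef]
      simp [hjk, hSj]
    | succ i hji ih =>
      intro hik1
      have hik : i ≤ k := by omega
      have hWi := ih (by omega)
      have hWi' : W i = V i := by rw [hWdef]; simp [hik]
      have hed := (hedge i hji hik).1
      have : W (i + 1) = W i + r i • u := by
        rw [← hWnext i hji hik, hWi', ← hed]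
        abel
      rw [this, hWi, hSsucc i hji, add_smul]
      abel
  have hWk1 : W (k + 1) = V ((k + 1) % n) := by
    rw [hWdef]; simp
  have hmain : V ((k + 1) % n) = V j + S (k + 1) • u := by
    rw [← hWk1]
    exact hW (k + 1) (by omega) le_rfl
  have hSpos : 0 < S (k + 1) := by
    rw [hSdef]
    apply Finset.sum_pos' (fun t _ => hrnn t)
    exact ⟨j, Finset.mem_Ico.mpr ⟨le_rfl, by omega⟩, (hedge j le_rfl hjk).2⟩
  -- the affine parametrization
  set f : ℝ →ᵃ[ℝ] ℝ × ℝ := AffineMap.lineMap (V j) (V j + u) with hfdef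
  have hfapp : ∀ t : ℝ, f t = V j + t • u := by
    intro t
    rw [hfdef, AffineMap.lineMap_apply]
    simp [vsub_eq_sub, vadd_eq_add]
    abel
  have hfinj : Function.Injective f := by
    apply AffineMap.lineMap_injective
    intro hcon
    apply hu0
    have := congrArg (fun p => p - V j) hcon
    simpa using this.symm
  have hVW : ∀ i, j ≤ i → i ≤ k → V i = f (S i) := by
    intro i hji hik
    rw [hfapp]
    have := hW i hji (by omega)
    rw [hWdef] at this
    simpa [hik] using this
  have hVW' : ∀ i, j ≤ i → i ≤ k → V ((i + 1) % n) = f (S (i + 1)) := by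
    intro i hji hik
    rw [hfapp, hWnext i hji hik]
    exact hW (i + 1) (by omega) (by omega)
  have hseg : ∀ i, j ≤ i → i ≤ k →
      segment ℝ (V i) (V ((i + 1) % n)) = f '' Set.Icc (S i) (S (i + 1)) := by
    intro i hji hik
    rw [hVW i hji hik, hVW' i hji hik, ← image_segment,
      segment_eq_Icc (hSmono (Nat.le_succ i))]
  -- conclusions
  refine ⟨?_, ?_, ?_, ?_⟩
  · rw [hmain]
    intro hcon
    have : S (k + 1) • u = 0 := by
      have := congrArg (fun p => p - V j) hcon
      simpa using this
    rcases smul_eq_zero.mp this with h0 | h0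
    · exact absurd h0 (ne_of_gt hSpos)
    · exact hu0 h0
  · intro i hji hik
    apply parg_congr
    rw [hargedge i hji hik]
    have : V ((k + 1) % n) - V j = S (k + 1) • u := by
      rw [hmain]; abel
    rw [this, cxv_smul, Complex.arg_real_mul _ hSpos, hargu]
  · have hL : segment ℝ (V j) (V ((k + 1) % n)) = f '' Set.Icc (S j) (S (k + 1)) := by
      have h1 : V j = f (S j) := by rw [hfapp, hSj]; simp
      have h2 : V ((k + 1) % n) = f (S (k + 1)) := by rw [hfapp]; exact hmain
      rw [h1, h2, ← image_segment, segment_eq_Icc (hSmono (by omega : j ≤ k + 1))]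
    rw [hL, ← biUnion_Icc_real S hSmono j k hjk, Set.image_iUnion₂]
    apply Set.iUnion₂_congr
    intro i hi
    rw [Finset.mem_Icc] at hi
    exact (hseg i hi.1 hi.2).symm
  · have hhoe : ∀ i, j ≤ i → i ≤ k →
        halfOpenEdge n V i = f '' Set.Ico (S i) (S (i + 1)) := by
      intro i hji hik
      rw [halfOpenEdge, hseg i hji hik, hVW' i hji hik, ← Set.image_singleton,
        ← Set.image_diff hfinj, Set.Icc_sdiff_right]
    have key : ∀ i t, j ≤ i → t ≤ k → i < t →
        f '' Set.Ico (S i) (S (i + 1)) ∩ f '' Set.Ico (S t) (S (t + 1)) = ∅ := by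
      intro i t hji htk hit
      rw [← Set.image_inter hfinj]
      have : Set.Ico (S i) (S (i + 1)) ∩ Set.Ico (S t) (S (t + 1)) = ∅ := by
        apply Set.eq_empty_of_forall_notMem
        rintro x ⟨⟨_, hx2⟩, hx3, _⟩
        have : S (i + 1) ≤ S t := hSmono hit
        linarith
      rw [this, Set.image_empty]
    intro i hji hik t hjt htk hit
    rw [hhoe i hji hik, hhoe t hjt htk]
    rcases lt_or_gt_of_ne hit with hlt | hgt
    · exact key i t hji htk hlt
    · rw [Set.inter_comm]
      exact key t i hjt hik hgt
end

section
/- Let n ≥ 3 and let P = (V_0,…,V_{n−1}) be a locally-ordinary c-increasing n-gon in ℝ². Then for every i ∈ {0,…,n−1}, all the vertices V_j with j ∈ {0,…,n−1} ∖ {i, i⊕1} lie strictly on one side of the line through V_i and V_{i+1}; that is, there is an open half-plane H with boundary the line through V_i and V_{i+1} such that V_j ∈ H for all such j (here i⊕1 := i+1 for i ≤ n−2 and i⊕1 := 0 for i = n−1). -/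
namespace CIAux

noncomputable def nv (v : ℝ × ℝ) : ℝ := ‖((v.1 : ℂ) + v.2 * Complex.I)‖

lemma z_ne {v : ℝ × ℝ} (hv : v ≠ 0) : ((v.1 : ℂ) + v.2 * Complex.I) ≠ 0 := by
  intro h
  apply hv
  have h1 : ((v.1 : ℂ) + v.2 * Complex.I).re = 0 := by rw [h]; simp
  have h2 : ((v.1 : ℂ) + v.2 * Complex.I).im = 0 := by rw [h]; simp
  simp at h1 h2
  rw [Prod.ext_iff]
  exact ⟨by simpa using h1, by simpa using h2⟩

lemma nv_pos {v : ℝ × ℝ} (hv : v ≠ 0) : 0 < nv v := by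
  simpa [nv] using (norm_pos_iff.mpr (z_ne hv))

lemma parg_mem (v : ℝ × ℝ) : 0 ≤ parg v ∧ parg v < 2 * Real.pi := by
  have h := Complex.arg_mem_Ioc ((v.1 : ℂ) + v.2 * Complex.I)
  simp only [Set.mem_Ioc] at h
  have hπ := Real.pi_pos
  unfold parg
  split <;> constructor <;> linarith

lemma parg_cos {v : ℝ × ℝ} (hv : v ≠ 0) : Real.cos (parg v) = v.1 / nv v := by
  have h := Complex.cos_arg (z_ne hv)
  have hre : ((v.1 : ℂ) + v.2 * Complex.I).re = v.1 := by simp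
  unfold parg nv
  split
  · rw [Real.cos_add_two_pi, h, hre]
  · rw [h, hre]

lemma parg_sin {v : ℝ × ℝ} (hv : v ≠ 0) : Real.sin (parg v) = v.2 / nv v := by
  have h := Complex.sin_arg ((v.1 : ℂ) + v.2 * Complex.I)
  have him : ((v.1 : ℂ) + v.2 * Complex.I).im = v.2 := by simp
  unfold parg nv
  split
  · rw [Real.sin_add_two_pi, h, him]
  · rw [h, him]

lemma cross_eq {u v : ℝ × ℝ} (hu : u ≠ 0) (hv : v ≠ 0) :
    u.1 * v.2 - u.2 * v.1 = nv u * nv v * Real.sin (parg v - parg u) := by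
  have hnu := nv_pos hu
  have hnv := nv_pos hv
  rw [Real.sin_sub, parg_sin hu, parg_cos hu, parg_sin hv, parg_cos hv]
  field_simp

noncomputable def crossMap (v : ℝ × ℝ) : (ℝ × ℝ) →ₗ[ℝ] ℝ where
  toFun w := v.1 * w.2 - v.2 * w.1
  map_add' a b := by simp [Prod.fst_add, Prod.snd_add]; ring
  map_smul' r a := by simp [Prod.smul_fst, Prod.smul_snd, smul_eq_mul]; ring

@[simp] lemma crossMap_apply (v w : ℝ × ℝ) : crossMap v w = v.1 * w.2 - v.2 * w.1 := rfl

lemma sin_neg_of (x : ℝ) (h1 : Real.pi < x) (h2 : x < 2 * Real.pi) : Real.sin x < 0 := by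
  have := Real.sin_pos_of_pos_of_lt_pi (x := x - Real.pi) (by linarith) (by linarith)
  rw [Real.sin_sub_pi] at this; linarith

lemma sin_nonpos_of (x : ℝ) (h1 : Real.pi ≤ x) (h2 : x < 2 * Real.pi) : Real.sin x ≤ 0 := by
  have := Real.sin_nonneg_of_nonneg_of_le_pi (x := x - Real.pi) (by linarith) (by linarith)
  rw [Real.sin_sub_pi] at this; linarith

lemma sum_shift {M : Type*} [AddCommMonoid M] (n a : ℕ) (hn : 0 < n) (ha : a ≤ n) (g : ℕ → M) :
    ∑ u ∈ Finset.range n, g ((a + u) % n) = ∑ m ∈ Finset.range n, g m := by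
  refine Finset.sum_nbij' (i := fun u => (a + u) % n) (j := fun m => (m + (n - a)) % n)
    (fun u hu => Finset.mem_range.mpr (Nat.mod_lt _ hn))
    (fun m hm => Finset.mem_range.mpr (Nat.mod_lt _ hn)) ?_ ?_ (fun u hu => rfl)
  · intro u hu
    rw [Finset.mem_range] at hu
    show ((a + u) % n + (n - a)) % n = u
    have h1 : ((a + u) % n + (n - a)) % n = (a + u + (n - a)) % n := Nat.mod_add_mod _ _ _
    have h2 : a + u + (n - a) = u + n := by omega
    rw [h1, h2, Nat.add_mod_right, Nat.mod_eq_of_lt hu]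
  · intro m hm
    rw [Finset.mem_range] at hm
    show (a + (m + (n - a)) % n) % n = m
    have h1 : (a + (m + (n - a)) % n) % n = (a + (m + (n - a))) % n :=
      Nat.ModEq.add_left a (Nat.mod_modEq _ n)
    have h2 : a + (m + (n - a)) = m + n := by omega
    rw [h1, h2, Nat.add_mod_right, Nat.mod_eq_of_lt hm]

lemma partial_pos (N : ℕ) (hN : 2 ≤ N) (w θ : ℕ → ℝ)
    (hw : ∀ u, 1 ≤ u → u ≤ N → 0 < w u)
    (hθr : ∀ u, 1 ≤ u → u ≤ N → 0 < θ u ∧ θ u < 2 * Real.pi)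
    (hmono : ∀ s t, 1 ≤ s → s < t → t ≤ N → θ s < θ t)
    (htot : ∑ u ∈ Finset.Ioc 0 N, w u * Real.sin (θ u) = 0) :
    ∀ t, 1 ≤ t → t ≤ N - 1 → 0 < ∑ u ∈ Finset.Ioc 0 t, w u * Real.sin (θ u) := by
  have hπ := Real.pi_pos
  have h1pi : θ 1 < Real.pi := by
    by_contra hcon
    push_neg at hcon
    have hlt : ∑ u ∈ Finset.Ioc 0 N, w u * Real.sin (θ u) < ∑ u ∈ Finset.Ioc 0 N, (0 : ℝ) := by
      apply Finset.sum_lt_sum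
      · intro u hu
        rw [Finset.mem_Ioc] at hu
        have hθu : Real.pi ≤ θ u := by
          rcases eq_or_lt_of_le (show 1 ≤ u from hu.1) with h | h
          · rw [← h]; exact hcon
          · exact le_of_lt (lt_of_le_of_lt hcon (hmono 1 u le_rfl h hu.2))
        have := sin_nonpos_of (θ u) hθu (hθr u hu.1 hu.2).2
        exact mul_nonpos_iff.mpr (Or.inl ⟨le_of_lt (hw u hu.1 hu.2), this⟩)
      · refine ⟨2, Finset.mem_Ioc.mpr ⟨by omega, hN⟩, ?_⟩
        have hθ2 : Real.pi < θ 2 := lt_of_le_of_lt hcon (hmono 1 2 le_rfl one_lt_two hN)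
        have := sin_neg_of (θ 2) hθ2 (hθr 2 one_le_two hN).2
        exact mul_neg_of_pos_of_neg (hw 2 one_le_two hN) this
    rw [Finset.sum_const_zero] at hlt
    linarith
  have hNpi : Real.pi < θ N := by
    by_contra hcon
    push_neg at hcon
    have hlt : ∑ u ∈ Finset.Ioc 0 N, (0 : ℝ) < ∑ u ∈ Finset.Ioc 0 N, w u * Real.sin (θ u) := by
      apply Finset.sum_lt_sum
      · intro u hu
        rw [Finset.mem_Ioc] at hu
        have hθu : θ u ≤ Real.pi := by
          rcases eq_or_lt_of_le hu.2 with h | h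
          · rw [h]; exact hcon
          · exact le_of_lt (lt_of_lt_of_le (hmono u N hu.1 h le_rfl) hcon)
        have := Real.sin_nonneg_of_nonneg_of_le_pi (le_of_lt (hθr u hu.1 hu.2).1) hθu
        exact mul_nonneg (le_of_lt (hw u hu.1 hu.2)) this
      · refine ⟨1, Finset.mem_Ioc.mpr ⟨one_pos, by omega⟩, ?_⟩
        have := Real.sin_pos_of_pos_of_lt_pi (hθr 1 le_rfl (by omega)).1 h1pi
        exact mul_pos (hw 1 le_rfl (by omega)) this
    rw [Finset.sum_const_zero] at hlt
    linarith
  intro t ht1 htN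
  rcases le_or_gt (θ t) Real.pi with hcase | hcase
  · have hlt : ∑ u ∈ Finset.Ioc 0 t, (0 : ℝ) < ∑ u ∈ Finset.Ioc 0 t, w u * Real.sin (θ u) := by
      apply Finset.sum_lt_sum
      · intro u hu
        rw [Finset.mem_Ioc] at hu
        have hθu : θ u ≤ Real.pi := by
          rcases eq_or_lt_of_le hu.2 with h | h
          · rw [h]; exact hcase
          · exact le_of_lt (lt_of_lt_of_le (hmono u t hu.1 h (by omega)) hcase)
        have hu' : u ≤ N := by omega
        have := Real.sin_nonneg_of_nonneg_of_le_pi (le_of_lt (hθr u hu.1 hu').1) hθu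
        exact mul_nonneg (le_of_lt (hw u hu.1 hu')) this
      · refine ⟨1, Finset.mem_Ioc.mpr ⟨one_pos, ht1⟩, ?_⟩
        have := Real.sin_pos_of_pos_of_lt_pi (hθr 1 le_rfl (by omega)).1 h1pi
        exact mul_pos (hw 1 le_rfl (by omega)) this
    rw [Finset.sum_const_zero] at hlt
    exact hlt
  · have hsplit := Finset.sum_Ioc_consecutive (fun u => w u * Real.sin (θ u))
      (Nat.zero_le t) (show t ≤ N by omega)
    have hneg : ∑ u ∈ Finset.Ioc t N, w u * Real.sin (θ u) < 0 := by
      have hlt : ∑ u ∈ Finset.Ioc t N, w u * Real.sin (θ u) < ∑ u ∈ Finset.Ioc t N, (0 : ℝ) := by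
        apply Finset.sum_lt_sum
        · intro u hu
          rw [Finset.mem_Ioc] at hu
          have hθu : Real.pi < θ u := by
            rcases eq_or_lt_of_le (le_of_lt hu.1) with h | h
            · rw [← h]; exact hcase
            · exact lt_trans hcase (hmono t u ht1 h hu.2)
          have hu1 : 1 ≤ u := by omega
          have := sin_neg_of (θ u) hθu (hθr u hu1 hu.2).2
          exact le_of_lt (mul_neg_of_pos_of_neg (hw u hu1 hu.2) this)
        · refine ⟨N, Finset.mem_Ioc.mpr ⟨by omega, le_rfl⟩, ?_⟩
          have := sin_neg_of (θ N) hNpi (hθr N (by omega) le_rfl).2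
          exact mul_neg_of_pos_of_neg (hw N (by omega) le_rfl) this
      rw [Finset.sum_const_zero] at hlt
      exact hlt
    have : ∑ u ∈ Finset.Ioc 0 t, w u * Real.sin (θ u)
        + ∑ u ∈ Finset.Ioc t N, w u * Real.sin (θ u) = 0 := by rw [hsplit]; exact htot
    linarith

lemma ne_zero_iff (v : ℝ × ℝ) : v ≠ 0 ↔ v.1 ≠ 0 ∨ v.2 ≠ 0 := by
  constructor
  · intro h
    by_contra hc
    push_neg at hc
    exact h (Prod.ext_iff.mpr ⟨by simpa using hc.1, by simpa using hc.2⟩)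
  · rintro (h | h) h1 <;> rw [h1] at h <;> simp at h

lemma crossMap_ne_zero {v : ℝ × ℝ} (hv : v ≠ 0) : crossMap v ≠ 0 := by
  intro h
  have h2 := LinearMap.congr_fun h (-v.2, v.1)
  simp only [crossMap_apply, LinearMap.zero_apply] at h2
  rcases (ne_zero_iff v).mp hv with h1 | h1 <;>
    [have := mul_self_pos.mpr h1; have := mul_self_pos.mpr h1] <;> nlinarith [mul_self_nonneg v.1, mul_self_nonneg v.2]

lemma mem_line_iff (a b W : ℝ × ℝ) :
    W ∈ affineSpan ℝ ({a, b} : Set (ℝ × ℝ)) ↔ ∃ r : ℝ, r • (b - a) = W - a := by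
  have h := @vadd_left_mem_affineSpan_pair ℝ _ _ _ _ _ _ a b (W - a)
  simp only [vsub_eq_sub, vadd_eq_add, sub_add_cancel] at h
  exact h

lemma line_eq (a b : ℝ × ℝ) (hab : b - a ≠ 0) :
    {W : ℝ × ℝ | crossMap (b - a) W = crossMap (b - a) a}
      = (affineSpan ℝ ({a, b} : Set (ℝ × ℝ)) : Set (ℝ × ℝ)) := by
  have hd : (b - a).1 ^ 2 + (b - a).2 ^ 2 ≠ 0 := by
    rcases (ne_zero_iff _).mp hab with h | h <;> positivity
  ext W
  simp only [Set.mem_setOf_eq, SetLike.mem_coe, mem_line_iff, crossMap_apply,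
    Prod.fst_sub, Prod.snd_sub] at *
  constructor
  · intro hW
    have hker : (b.1 - a.1) * (W.2 - a.2) - (b.2 - a.2) * (W.1 - a.1) = 0 := by
      linear_combination hW
    refine ⟨((W.1 - a.1) * (b.1 - a.1) + (W.2 - a.2) * (b.2 - a.2))
      / ((b.1 - a.1) ^ 2 + (b.2 - a.2) ^ 2), Prod.ext_iff.mpr ⟨?_, ?_⟩⟩
    · show ((W.1 - a.1) * (b.1 - a.1) + (W.2 - a.2) * (b.2 - a.2))
        / ((b.1 - a.1) ^ 2 + (b.2 - a.2) ^ 2) * (b - a).1 = (W - a).1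
      simp only [Prod.fst_sub]
      rw [div_mul_eq_mul_div, div_eq_iff hd]
      linear_combination (b.2 - a.2) * hker
    · show ((W.1 - a.1) * (b.1 - a.1) + (W.2 - a.2) * (b.2 - a.2))
        / ((b.1 - a.1) ^ 2 + (b.2 - a.2) ^ 2) * (b - a).2 = (W - a).2
      simp only [Prod.snd_sub]
      rw [div_mul_eq_mul_div, div_eq_iff hd]
      linear_combination (a.1 - b.1) * hker
  · rintro ⟨r, hr⟩
    have h1 := congrArg Prod.fst hr
    have h2 := congrArg Prod.snd hr
    simp only [Prod.smul_fst, Prod.smul_snd, Prod.fst_sub, Prod.snd_sub, smul_eq_mul] at h1 h2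
    linear_combination (b.2 - a.2) * h1 - (b.1 - a.1) * h2

def eV (n : ℕ) (V : ℕ → ℝ × ℝ) (m : ℕ) : ℝ × ℝ := V ((m + 1) % n) - V m

lemma edgeArg_eq (n : ℕ) (V : ℕ → ℝ × ℝ) (m : ℕ) : edgeArg n V m = parg (eV n V m) := rfl

lemma telescope (n : ℕ) (V : ℕ → ℝ × ℝ) (a : ℕ) (t : ℕ) :
    ∑ u ∈ Finset.Ioc 0 t, eV n V ((a + u) % n)
      = V ((a + t + 1) % n) - V ((a + 1) % n) := by
  induction t with
  | zero => simp
  | succ t ih =>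
    rw [Finset.sum_Ioc_succ_top (Nat.zero_le t), ih,
      show a + (t + 1) = a + t + 1 by omega]
    have h1 : ((a + t + 1) % n + 1) % n = (a + t + 1 + 1) % n :=
      Nat.ModEq.add_right 1 (Nat.mod_modEq (a + t + 1) n)
    simp only [eV, h1]
    abel

lemma closed_sum (n : ℕ) (hn : 0 < n) (V : ℕ → ℝ × ℝ) :
    ∑ m ∈ Finset.range n, eV n V m = 0 := by
  have h1 : ∑ m ∈ Finset.range n, V ((1 + m) % n) = ∑ m ∈ Finset.range n, V m :=
    sum_shift n 1 hn (by omega) V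
  have h2 : ∑ m ∈ Finset.range n, V ((m + 1) % n) = ∑ m ∈ Finset.range n, V m := by
    rw [← h1]
    exact Finset.sum_congr rfl fun m _ => by rw [Nat.add_comm m 1]
  simp only [eV]
  rw [Finset.sum_sub_distrib, h2, sub_self]

end CIAux

/-- In a locally-ordinary c-increasing `n`-gon with `n ≥ 3`, for every edge
`[V_i, V_{i+1}]` all the other vertices lie strictly on one side of the line through
`V_i` and `V_{i+1}`: there are a nonzero linear functional `f` and a constant `c` with
the line equal to `{W | f W = c}` and `f (V_j) > c` for all `j ∉ {i, i⊕1}`. -/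
theorem cIncreasing_strictly_oneSide
    (n : ℕ) (hn : 3 ≤ n) (V : ℕ → ℝ × ℝ)
    (hLO : LocallyOrdinary n V) (hCI : CIncreasing n V) :
    ∀ i < n, ∃ (f : (ℝ × ℝ) →ₗ[ℝ] ℝ) (c : ℝ), f ≠ 0 ∧
      {W : ℝ × ℝ | f W = c}
        = (affineSpan ℝ ({V i, V ((i + 1) % n)} : Set (ℝ × ℝ)) : Set (ℝ × ℝ)) ∧
      ∀ j < n, j ≠ i → j ≠ (i + 1) % n → c < f (V j) := by
  intro i hi
  obtain ⟨k, hk, hCI'⟩ := hCI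
  have hn0 : 0 < n := by omega
  have he : ∀ m, m < n → CIAux.eV n V m ≠ 0 :=
    fun m hm => sub_ne_zero.mpr (Ne.symm (hLO m hm))
  have hidx : ∀ t : ℕ, (i + t) % n < n := fun t => Nat.mod_lt _ hn0
  set α : ℕ → ℝ := fun t => edgeArg n V ((i + t) % n) with hα_def
  have hα_parg : ∀ t, α t = parg (CIAux.eV n V ((i + t) % n)) := fun t => rfl
  have hα0 : α 0 = parg (CIAux.eV n V i) := by
    simp only [hα_def, Nat.add_zero, Nat.mod_eq_of_lt hi]
    exact CIAux.edgeArg_eq n V i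
  have hαr : ∀ t, 0 ≤ α t ∧ α t < 2 * Real.pi := fun t => CIAux.parg_mem _
  set ρ0 : ℕ := (i + n - k) % n with hρ0_def
  have hρ0n : ρ0 < n := Nat.mod_lt _ hn0
  have hρ : ∀ t : ℕ, ((i + t) % n + n - k) % n = (ρ0 + t) % n := by
    intro t
    rw [show (i + t) % n + n - k = (i + t) % n + (n - k) by omega,
      hρ0_def, show i + n - k = i + (n - k) by omega,
      Nat.mod_add_mod, Nat.mod_add_mod]
    congr 1
    omega
  have hord : ∀ s t : ℕ, (ρ0 + s) % n < (ρ0 + t) % n → α s < α t := by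
    intro s t h
    exact hCI' _ (hidx s) _ (hidx t) (by rw [hρ, hρ]; exact h)
  have hρ00 : (ρ0 + 0) % n = ρ0 := by rw [Nat.add_zero, Nat.mod_eq_of_lt hρ0n]
  have hlt : ∀ t, 1 ≤ t → t ≤ n - 1 → ρ0 + t < n → α 0 < α t := by
    intro t h1 h2 h3
    apply hord
    rw [hρ00, Nat.mod_eq_of_lt h3]
    omega
  have hgt : ∀ t, 1 ≤ t → t ≤ n - 1 → n ≤ ρ0 + t → α t < α 0 := by
    intro t h1 h2 h3
    apply hord
    rw [hρ00, Nat.mod_eq_sub_mod h3, Nat.mod_eq_of_lt (show ρ0 + t - n < n by omega)]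
    omega
  set θ : ℕ → ℝ := fun t => if α t < α 0 then α t - α 0 + 2 * Real.pi else α t - α 0
    with hθ_def
  have hθ_lt : ∀ t, α 0 < α t → θ t = α t - α 0 := by
    intro t h
    simp only [hθ_def]
    rw [if_neg (not_lt.mpr (le_of_lt h))]
  have hθ_gt : ∀ t, α t < α 0 → θ t = α t - α 0 + 2 * Real.pi := by
    intro t h
    simp only [hθ_def]
    rw [if_pos h]
  have hθr : ∀ t, 1 ≤ t → t ≤ n - 1 → 0 < θ t ∧ θ t < 2 * Real.pi := by
    intro t h1 h2
    rcases lt_or_ge (ρ0 + t) n with h3 | h3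
    · have h4 := hlt t h1 h2 h3
      rw [hθ_lt t h4]
      exact ⟨by linarith, by linarith [(hαr t).2, (hαr 0).1]⟩
    · have h4 := hgt t h1 h2 h3
      rw [hθ_gt t h4]
      exact ⟨by linarith [(hαr t).1, (hαr 0).2], by linarith⟩
  have hθmono : ∀ s t, 1 ≤ s → s < t → t ≤ n - 1 → θ s < θ t := by
    intro s t hs hst ht
    have hsn : s ≤ n - 1 := by omega
    rcases lt_or_ge (ρ0 + t) n with h3 | h3
    · have has := hlt s hs hsn (by omega)
      have hat := hlt t (by omega) ht h3
      have hstα : α s < α t := hord s t (by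
        rw [Nat.mod_eq_of_lt (show ρ0 + s < n by omega), Nat.mod_eq_of_lt h3]; omega)
      rw [hθ_lt s has, hθ_lt t hat]
      linarith
    · rcases lt_or_ge (ρ0 + s) n with h4 | h4
      · have has := hlt s hs hsn h4
        have hat := hgt t (by omega) ht h3
        rw [hθ_lt s has, hθ_gt t hat]
        linarith [(hαr s).2, (hαr t).1, (hαr 0).1, (hαr 0).2]
      · have has := hgt s hs hsn h4
        have hat := hgt t (by omega) ht h3
        have hstα : α s < α t := hord s t (by
          rw [Nat.mod_eq_sub_mod h4, Nat.mod_eq_of_lt (show ρ0 + s - n < n by omega),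
            Nat.mod_eq_sub_mod h3, Nat.mod_eq_of_lt (show ρ0 + t - n < n by omega)]
          omega)
        rw [hθ_gt s has, hθ_gt t hat]
        linarith
  have hsinθ : ∀ t, Real.sin (θ t) = Real.sin (α t - α 0) := by
    intro t
    simp only [hθ_def]
    split
    · exact Real.sin_add_two_pi _
    · rfl
  have hf_edge : ∀ t, 1 ≤ t → t ≤ n - 1 →
      CIAux.crossMap (CIAux.eV n V i) (CIAux.eV n V ((i + t) % n))
        = (CIAux.nv (CIAux.eV n V i) * CIAux.nv (CIAux.eV n V ((i + t) % n)))
          * Real.sin (θ t) := by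
    intro t _ _
    rw [hsinθ, hα_parg, hα0, CIAux.crossMap_apply]
    exact CIAux.cross_eq (he i hi) (he _ (hidx t))
  have hS : ∀ t : ℕ, ∑ u ∈ Finset.Ioc 0 t, CIAux.crossMap (CIAux.eV n V i) (CIAux.eV n V ((i + u) % n))
      = CIAux.crossMap (CIAux.eV n V i) (V ((i + t + 1) % n) - V ((i + 1) % n)) := by
    intro t
    rw [← map_sum]
    exact congrArg _ (CIAux.telescope n V i t)
  have hcross_self : CIAux.crossMap (CIAux.eV n V i) (CIAux.eV n V i) = 0 := by
    rw [CIAux.crossMap_apply]; ring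
  have hVi1 : V ((i + 1) % n) = V i + CIAux.eV n V i := by
    simp only [CIAux.eV]; abel
  have htot : ∑ u ∈ Finset.Ioc 0 (n - 1),
      CIAux.crossMap (CIAux.eV n V i) (CIAux.eV n V ((i + u) % n)) = 0 := by
    rw [hS (n - 1)]
    rw [show i + (n - 1) + 1 = i + n by omega, Nat.add_mod_right, Nat.mod_eq_of_lt hi]
    rw [hVi1, map_sub, map_add, hcross_self]
    ring
  have hmain := CIAux.partial_pos (n - 1) (by omega)
    (fun u => CIAux.nv (CIAux.eV n V i) * CIAux.nv (CIAux.eV n V ((i + u) % n))) θ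
    (fun u h1 h2 => mul_pos (CIAux.nv_pos (he i hi)) (CIAux.nv_pos (he _ (hidx u))))
    hθr hθmono
    (by
      rw [← htot]
      exact Finset.sum_congr rfl fun u hu => by
        rw [Finset.mem_Ioc] at hu
        exact (hf_edge u hu.1 hu.2).symm)
  refine ⟨CIAux.crossMap (CIAux.eV n V i), CIAux.crossMap (CIAux.eV n V i) (V i),
    CIAux.crossMap_ne_zero (he i hi), ?_, ?_⟩
  · exact CIAux.line_eq (V i) (V ((i + 1) % n)) (he i hi)
  · intro j hj hji hji1
    set t : ℕ := (j + 2 * n - (i + 1)) % n with ht_def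
    have htn : t < n := Nat.mod_lt _ hn0
    have hjt : (i + 1 + t) % n = j := by
      have e1 : (i + 1 + t) % n = (i + 1 + (j + 2 * n - (i + 1))) % n :=
        Nat.ModEq.add_left (i + 1) (Nat.mod_modEq _ n)
      rw [e1, show i + 1 + (j + 2 * n - (i + 1)) = j + 2 * n by omega,
        Nat.add_mul_mod_self_right, Nat.mod_eq_of_lt hj]
    have ht1 : 1 ≤ t := by
      rcases Nat.eq_zero_or_pos t with h | h
      · exfalso
        apply hji1
        rw [← hjt, h]
      · exact h
    have ht2 : t ≤ n - 2 := by
      by_contra hcon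
      have ht' : t = n - 1 := by omega
      apply hji
      rw [← hjt, ht', show i + 1 + (n - 1) = i + n by omega, Nat.add_mod_right,
        Nat.mod_eq_of_lt hi]
    have hfj := hS t
    rw [show i + t + 1 = i + 1 + t by omega, hjt] at hfj
    have hpos := hmain t ht1 (by omega)
    have hsum_eq : ∑ u ∈ Finset.Ioc 0 t,
        CIAux.crossMap (CIAux.eV n V i) (CIAux.eV n V ((i + u) % n))
        = ∑ u ∈ Finset.Ioc 0 t,
          (fun u => CIAux.nv (CIAux.eV n V i) * CIAux.nv (CIAux.eV n V ((i + u) % n))) u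
            * Real.sin (θ u) :=
      Finset.sum_congr rfl fun u hu => by
        rw [Finset.mem_Ioc] at hu
        exact hf_edge u hu.1 (by omega)
    have h5 : (0 : ℝ) < CIAux.crossMap (CIAux.eV n V i) (V j - V ((i + 1) % n)) := by
      rw [← hfj, hsum_eq]
      exact hpos
    rw [map_sub, hVi1, map_add, hcross_self] at h5
    linarith
end
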